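/- In every red-blue colouring of the edges of a finite complete graph, either the red graph has diameter at most 2, or the blue graph has diameter at most 2, or both the red and blue graphs have diameter exactly 3. -/

import Mathlib

open SimpleGraph in
lemma compl_ediam_le_three_aux {V : Type*} (G : SimpleGraph V)
    (h : ¬ G.ediam ≤ 2) : Gᶜ.ediam ≤ 3 := by
  rw [SimpleGraph.ediam_le_iff] at h
  push_neg at h
  obtain ⟨u, v, huv⟩ := h
  have hne : u ≠ v := by
    rintro rfl
    simp [SimpleGraph.edist_self] at huv
  have hadj1 : ∀ a b, G.Adj a b → G.edist a b ≤ 1 :=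
    fun a b hab => le_of_eq ((SimpleGraph.edist_eq_one_iff_adj).2 hab)
  have hnadj : ¬ G.Adj u v := fun ha => (show (2 : ℕ∞) < G.edist u v from huv).not_ge ((hadj1 u v ha).trans (by norm_num))
  have hcom : ∀ w, ¬ (G.Adj u w ∧ G.Adj w v) := by
    rintro w ⟨h1, h2⟩
    refine (show (2 : ℕ∞) < G.edist u v from huv).not_ge ((SimpleGraph.edist_triangle (v := w)).trans ?_)
    calc G.edist u w + G.edist w v ≤ 1 + 1 := add_le_add (hadj1 _ _ h1) (hadj1 _ _ h2)
      _ = 2 := by norm_num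
  have huvc : Gᶜ.Adj u v := ⟨hne, hnadj⟩
  have key : ∀ x, Gᶜ.edist x u ≤ 1 ∨ Gᶜ.edist x v ≤ 1 := by
    intro x
    by_cases hxu : x = u
    · left; simp [hxu, SimpleGraph.edist_self]
    by_cases hxv : x = v
    · right; simp [hxv, SimpleGraph.edist_self]
    rcases not_and_or.mp (hcom x) with h1 | h2
    · left
      exact le_of_eq ((SimpleGraph.edist_eq_one_iff_adj).2 ⟨hxu, fun ha => h1 ha.symm⟩)
    · right
      exact le_of_eq ((SimpleGraph.edist_eq_one_iff_adj).2 ⟨hxv, h2⟩)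
  have heuv : Gᶜ.edist u v ≤ 1 := le_of_eq ((SimpleGraph.edist_eq_one_iff_adj).2 huvc)
  have heuv' : Gᶜ.edist v u ≤ 1 := by rwa [SimpleGraph.edist_comm] at heuv
  rw [SimpleGraph.ediam_le_iff]
  intro x y
  rcases key x with hx | hx <;> rcases key y with hy | hy
  · calc Gᶜ.edist x y ≤ Gᶜ.edist x u + Gᶜ.edist u y := SimpleGraph.edist_triangle
      _ ≤ 1 + 1 := add_le_add hx (by rwa [SimpleGraph.edist_comm])
      _ ≤ 3 := by norm_num
  · calc Gᶜ.edist x y ≤ Gᶜ.edist x u + Gᶜ.edist u y := SimpleGraph.edist_triangle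
      _ ≤ Gᶜ.edist x u + (Gᶜ.edist u v + Gᶜ.edist v y) :=
        add_le_add_right SimpleGraph.edist_triangle _
      _ ≤ 1 + (1 + 1) :=
        add_le_add hx (add_le_add heuv (by rwa [SimpleGraph.edist_comm]))
      _ = 3 := by norm_num
  · calc Gᶜ.edist x y ≤ Gᶜ.edist x v + Gᶜ.edist v y := SimpleGraph.edist_triangle
      _ ≤ Gᶜ.edist x v + (Gᶜ.edist v u + Gᶜ.edist u y) :=
        add_le_add_right SimpleGraph.edist_triangle _
      _ ≤ 1 + (1 + 1) :=
        add_le_add hx (add_le_add heuv' (by rwa [SimpleGraph.edist_comm]))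
      _ = 3 := by norm_num
  · calc Gᶜ.edist x y ≤ Gᶜ.edist x v + Gᶜ.edist v y := SimpleGraph.edist_triangle
      _ ≤ 1 + 1 := add_le_add hx (by rwa [SimpleGraph.edist_comm])
      _ ≤ 3 := by norm_num

/-- In every red-blue colouring of the edges of a finite complete graph (on ≥ 2
vertices), either red has diameter ≤ 2, or blue has diameter ≤ 2, or both have
diameter exactly 3 (diameter measured as `ediam`, infinite if disconnected). -/
theorem diam_two_or_two_or_both_three {V : Type*} [Fintype V] [Nontrivial V]
    (red blue : SimpleGraph V) (hcol : red ⊔ blue = ⊤) :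
    red.ediam ≤ 2 ∨ blue.ediam ≤ 2 ∨ (red.ediam = 3 ∧ blue.ediam = 3) := by
  have hrc : redᶜ ≤ blue := by
    calc redᶜ = redᶜ ⊓ (red ⊔ blue) := by rw [hcol, inf_top_eq]
      _ = redᶜ ⊓ blue := by rw [inf_sup_left]; simp
      _ ≤ blue := inf_le_right
  have hbc : blueᶜ ≤ red := by
    calc blueᶜ = blueᶜ ⊓ (red ⊔ blue) := by rw [hcol, inf_top_eq]
      _ = blueᶜ ⊓ red := by rw [inf_sup_left]; simp
      _ ≤ red := inf_le_right
  by_cases h1 : red.ediam ≤ 2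
  · exact Or.inl h1
  by_cases h2 : blue.ediam ≤ 2
  · exact Or.inr (Or.inl h2)
  have hb3 : blue.ediam ≤ 3 :=
    (SimpleGraph.ediam_anti hrc).trans (compl_ediam_le_three_aux red h1)
  have hr3 : red.ediam ≤ 3 :=
    (SimpleGraph.ediam_anti hbc).trans (compl_ediam_le_three_aux blue h2)
  have g1 : (3 : ℕ∞) ≤ red.ediam := Order.add_one_le_of_lt (lt_of_not_ge h1)
  have g2 : (3 : ℕ∞) ≤ blue.ediam := Order.add_one_le_of_lt (lt_of_not_ge h2)
  exact Or.inr (Or.inr ⟨le_antisymm hr3 g1, le_antisymm hb3 g2⟩)
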